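/- A Boolean function f : {0,1}^n → Bool that is both monotone (with respect to the componentwise order) and early is monotone with respect to the majorization order: if x ≤ y in the majorization order then f(x) ≤ f(y). -/

import Mathlib

private lemma stmt15_aux (n : ℕ) (f : (Fin n → Bool) → Bool)
    (hmono : Monotone f)
    (hearly : ∀ i j : Fin n, i < j → ∀ y : Fin n → Bool, y i = false → y j = false →
      f (Function.update y j true) = true → f (Function.update y i true) = true) :
    ∀ N : ℕ, ∀ x y : Fin n → Bool,
      (Finset.univ.filter (fun i => x i = true ∧ y i = false)).card ≤ N →
      (∀ k : Fin n, ∑ i ∈ Finset.univ.filter (fun i => i ≤ k), (x i).toNat ≤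
        ∑ i ∈ Finset.univ.filter (fun i => i ≤ k), (y i).toNat) →
      f x = true → f y = true := by
  intro N
  induction N with
  | zero =>
    intro x y hcard _ hfx
    have hS : (Finset.univ.filter (fun i => x i = true ∧ y i = false)) = ∅ :=
      Finset.card_eq_zero.mp (Nat.le_zero.mp hcard)
    have hle : x ≤ y := by
      intro j
      rcases hxj : x j with _ | _
      · exact Bool.false_le _
      · have hj : ¬ (x j = true ∧ y j = false) := by
          intro h
          have : j ∈ (Finset.univ.filter (fun i => x i = true ∧ y i = false)) := by
            simp [h.1, h.2]
          rw [hS] at this; simp at this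
        have : y j = true := by
          rcases hyj : y j with _ | _
          · exact absurd ⟨hxj, hyj⟩ hj
          · rfl
        rw [this]
    have := hmono hle
    rw [hfx] at this
    exact Bool.eq_true_of_true_le this
  | succ N IH =>
    intro x y hcard hmaj hfx
    by_cases hS : (Finset.univ.filter (fun i => x i = true ∧ y i = false)).Nonempty
    · set S := Finset.univ.filter (fun i => x i = true ∧ y i = false) with hSdef
      set i := S.min' hS with hidef
      have hiS : i ∈ S := Finset.min'_mem _ _
      have hxi : x i = true := (Finset.mem_filter.mp hiS).2.1
      have hyi : y i = false := (Finset.mem_filter.mp hiS).2.2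
      have hmin : ∀ j : Fin n, j < i → x j = true → y j = true := by
        intro j hj hxj
        rcases hyj : y j with _ | _
        · have : j ∈ S := by simp [hSdef, hxj, hyj]
          exact absurd (Finset.min'_le _ _ this) (not_le.mpr hj)
        · rfl
      -- find k < i with x k = false, y k = true
      have hsum_i := hmaj i
      have hiA : i ∈ Finset.univ.filter (fun j => j ≤ i) := by simp
      rw [← Finset.add_sum_erase _ _ hiA, ← Finset.add_sum_erase _ _ hiA] at hsum_i
      rw [hxi, hyi] at hsum_i
      simp only [Bool.toNat_true, Bool.toNat_false, Nat.zero_add] at hsum_i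
      have hlt : ∑ j ∈ (Finset.univ.filter (fun j => j ≤ i)).erase i, (x j).toNat <
          ∑ j ∈ (Finset.univ.filter (fun j => j ≤ i)).erase i, (y j).toNat := by omega
      obtain ⟨k, hkmem, hklt⟩ := Finset.exists_lt_of_sum_lt hlt
      have hki : k < i := by
        have hk1 := (Finset.mem_erase.mp hkmem).1
        have hk2 := (Finset.mem_filter.mp (Finset.mem_erase.mp hkmem).2).2
        exact lt_of_le_of_ne hk2 hk1
      have hxk : x k = false := by
        rcases h : x k with _ | _
        · rfl
        · rw [h] at hklt; rcases h2 : y k with _ | _ <;> rw [h2] at hklt <;> simp at hklt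
      have hyk : y k = true := by
        rcases h : y k with _ | _
        · rw [h, hxk] at hklt; simp at hklt
        · rfl
      have hkne : k ≠ i := ne_of_lt hki
      -- the moved vector
      set x' := Function.update (Function.update x i false) k true with hx'def
      -- f x' = true via hearly
      have hfx' : f x' = true := by
        have h1 : Function.update x i false k = false := by
          rw [Function.update_of_ne hkne, hxk]
        have h2 : (Function.update x i false : Fin n → Bool) i = false :=
          Function.update_self _ _ _
        have h3 : Function.update (Function.update x i false) i true = x := by
          funext j
          by_cases hj : j = i
          · subst hj; simp [hxi]
          · simp [Function.update_of_ne hj]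
        exact hearly k i hki (Function.update x i false) h1 h2 (by rw [h3]; exact hfx)
      -- toNat of x' as updates
      have hx'nat : (fun j => (x' j).toNat) =
          Function.update (Function.update (fun j => (x j).toNat) i 0) k 1 := by
        funext j
        by_cases hjk : j = k
        · subst hjk; simp [hx'def]
        · by_cases hji : j = i
          · subst hji
            simp [hx'def, Function.update_of_ne (Ne.symm hkne), Function.update_of_ne hjk]
          · simp [hx'def, Function.update_of_ne hjk, Function.update_of_ne hji]
      -- new card bound
      have hcard' : (Finset.univ.filter (fun j => x' j = true ∧ y j = false)).card ≤ N := by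
        have hsub : (Finset.univ.filter (fun j => x' j = true ∧ y j = false)) ⊆ S.erase i := by
          intro j hj
          rw [Finset.mem_filter] at hj
          obtain ⟨-, hx'j, hyj⟩ := hj
          by_cases hjk : j = k
          · subst hjk; rw [hyk] at hyj; exact absurd hyj (by simp)
          · by_cases hji : j = i
            · subst hji
              rw [hx'def, Function.update_of_ne (Ne.symm hkne), Function.update_self] at hx'j
              exact absurd hx'j (by simp)
            · have : x j = true := by
                rw [hx'def, Function.update_of_ne hjk, Function.update_of_ne hji] at hx'j
                exact hx'j
              exact Finset.mem_erase.mpr ⟨hji, by simp [hSdef, this, hyj]⟩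
        calc (Finset.univ.filter (fun j => x' j = true ∧ y j = false)).card
            ≤ (S.erase i).card := Finset.card_le_card hsub
          _ = S.card - 1 := Finset.card_erase_of_mem hiS
          _ ≤ N := by omega
      -- new majorization
      have hmaj' : ∀ m : Fin n, ∑ j ∈ Finset.univ.filter (fun j => j ≤ m), (x' j).toNat ≤
          ∑ j ∈ Finset.univ.filter (fun j => j ≤ m), (y j).toNat := by
        intro m
        have hrw : ∑ j ∈ Finset.univ.filter (fun j => j ≤ m), (x' j).toNat =
            ∑ j ∈ Finset.univ.filter (fun j => j ≤ m),
              Function.update (Function.update (fun j => (x j).toNat) i 0) k 1 j :=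
          Finset.sum_congr rfl (fun j _ => congrFun hx'nat j)
        rw [hrw]
        by_cases hkm : k ≤ m
        · have hkA : k ∈ Finset.univ.filter (fun j => j ≤ m) := by simp [hkm]
          rw [Finset.sum_update_of_mem hkA, ← Finset.erase_eq]
          by_cases him : i ≤ m
          · -- both in range: sums equal
            have hiA' : i ∈ (Finset.univ.filter (fun j => j ≤ m)).erase k := by
              simp [him, Ne.symm hkne]
            rw [Finset.sum_update_of_mem hiA', ← Finset.erase_eq]
            have hiA2 : i ∈ Finset.univ.filter (fun j => j ≤ m) := by simp [him]
            have hx_sum : ∑ j ∈ Finset.univ.filter (fun j => j ≤ m), (x j).toNat =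
                1 + (0 + ∑ j ∈ ((Finset.univ.filter (fun j => j ≤ m)).erase k).erase i,
                  (x j).toNat) := by
              rw [← Finset.add_sum_erase _ _ hkA, ← Finset.add_sum_erase _ _ hiA']
              rw [hxk, hxi]
              simp
            rw [← hx_sum]
            exact hmaj m
          · -- k ≤ m < i: strict inequality needed
            have hiNA : i ∉ (Finset.univ.filter (fun j => j ≤ m)).erase k := by
              simp [him]
            rw [Finset.sum_update_of_notMem hiNA]
            have hlt2 : ∑ j ∈ Finset.univ.filter (fun j => j ≤ m), (x j).toNat <
                ∑ j ∈ Finset.univ.filter (fun j => j ≤ m), (y j).toNat := by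
              apply Finset.sum_lt_sum
              · intro j hj
                rcases hxj : x j with _ | _
                · simp
                · have hjm : j ≤ m := (Finset.mem_filter.mp hj).2
                  have hji : j < i := lt_of_le_of_lt hjm (not_le.mp him)
                  rw [hmin j hji hxj]
              · exact ⟨k, hkA, by rw [hxk, hyk]; simp⟩
            have hxe : ∑ j ∈ (Finset.univ.filter (fun j => j ≤ m)).erase k, (x j).toNat =
                ∑ j ∈ Finset.univ.filter (fun j => j ≤ m), (x j).toNat := by
              rw [← Finset.add_sum_erase _ _ hkA, hxk]; simp
            rw [hxe]
            omega
        · -- m < k < i : nothing changed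
          have hkNA : k ∉ Finset.univ.filter (fun j => j ≤ m) := by simp [hkm]
          have hiNA : i ∉ Finset.univ.filter (fun j => j ≤ m) := by
            simp only [Finset.mem_filter, Finset.mem_univ, true_and]
            exact fun h => hkm ((le_of_lt hki).trans h)
          rw [Finset.sum_update_of_notMem hkNA, Finset.sum_update_of_notMem hiNA]
          exact hmaj m
      exact IH x' y hcard' hmaj' hfx'
    · -- S empty: pointwise ≤, monotone
      have hle : x ≤ y := by
        intro j
        rcases hxj : x j with _ | _
        · exact Bool.false_le _
        · rcases hyj : y j with _ | _
          · exact absurd ⟨j, by simp [hxj, hyj]⟩ hS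
          · exact le_rfl
      have := hmono hle
      rw [hfx] at this
      exact Bool.eq_true_of_true_le this

/-- A Boolean function that is monotone (componentwise) and early is monotone with
respect to the majorization order. -/
theorem stmt15 (n : ℕ) (f : (Fin n → Bool) → Bool)
    (hmono : Monotone f)
    (hearly : ∀ i j : Fin n, i < j → ∀ y : Fin n → Bool, y i = false → y j = false →
      f (Function.update y j true) = true → f (Function.update y i true) = true) :
    ∀ x y : Fin n → Bool,
      (∀ k : Fin n, ∑ i ∈ Finset.univ.filter (fun i => i ≤ k), (x i).toNat ≤
        ∑ i ∈ Finset.univ.filter (fun i => i ≤ k), (y i).toNat) →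
      f x ≤ f y := by
  intro x y hmaj
  rcases hfx : f x with _ | _
  · exact Bool.false_le _
  · have := stmt15_aux n f hmono hearly
      ((Finset.univ.filter (fun i => x i = true ∧ y i = false)).card) x y le_rfl hmaj hfx
    rw [this]
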